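/- Let Ω ⊆ ℝⁿ be a bounded open set contained in the closed ball of radius R > 0 centered at the origin, let σ : Ω → ℝ be measurable and essentially bounded, let D = esssupp(σ − 1), let ρ ∈ ℝⁿ be a unit vector, let p > 0, and let t ∈ ℝ satisfy m(D \ {x : x·ρ ≤ t}) = 0. Then for all τ > 0, ∫_Ω |σ(x) − 1| e^{pτ(x·ρ − t)} dx ≤ ‖σ − 1‖_{L^∞(Ω)} (2R)^{n−1}/(pτ); in particular this integral tends to 0 as τ → ∞. -/

import Mathlib

open MeasureTheory Filter Set
open scoped RealInnerProductSpace Topology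
open scoped ENNReal NNReal

noncomputable section

/-- The closed half-space `H_{ρ,t} = {x ∈ ℝⁿ : x·ρ ≤ t}`. -/
def halfSpace {n : ℕ} (ρ : EuclideanSpace ℝ (Fin n)) (t : ℝ) :
    Set (EuclideanSpace ℝ (Fin n)) :=
  {x | ⟪x, ρ⟫ ≤ t}

/-- The essential support of a measurable function `f` on `Ω`: the set `Ω` minus the
union of all open sets `O ⊆ Ω` on which `f = 0` almost everywhere. -/
def essSupport {n : ℕ} (Ω : Set (EuclideanSpace ℝ (Fin n)))
    (f : EuclideanSpace ℝ (Fin n) → ℝ) : Set (EuclideanSpace ℝ (Fin n)) :=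
  Ω \ ⋃ O ∈ {O : Set (EuclideanSpace ℝ (Fin n)) |
      IsOpen O ∧ O ⊆ Ω ∧ volume {x ∈ O | f x ≠ 0} = 0}, O

lemma aux_exp_Ioi (c t : ℝ) (hc : 0 < c) :
    IntegrableOn (fun x => Real.exp (c * (-x - t))) (Ioi (-t)) ∧
      ∫ x in Ioi (-t), Real.exp (c * (-x - t)) = c⁻¹ := by
  have hderiv : ∀ x ∈ Ici (-t),
      HasDerivAt (fun x => -(c⁻¹ * Real.exp (c * (-x - t))))
        (Real.exp (c * (-x - t))) x := by
    intro x _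
    have h1 : HasDerivAt (fun x : ℝ => c * (-x - t)) (-c) x := by
      simpa using ((hasDerivAt_id x).neg.sub_const t).const_mul c
    have h2 := (h1.exp.const_mul c⁻¹).neg
    refine h2.congr_deriv ?_
    rw [mul_neg, mul_neg, neg_neg, mul_comm (Real.exp _) c, ← mul_assoc, inv_mul_cancel₀ hc.ne', one_mul]
  have hpos : ∀ x ∈ Ioi (-t), 0 ≤ Real.exp (c * (-x - t)) := fun x _ => (Real.exp_pos _).le
  have htend : Tendsto (fun x => -(c⁻¹ * Real.exp (c * (-x - t)))) atTop (nhds 0) := by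
    have h0 : Tendsto (fun x : ℝ => -x + -t) atTop atBot :=
      tendsto_atBot_add_const_right atTop (-t) tendsto_neg_atTop_atBot
    have : Tendsto (fun x : ℝ => c * (-x - t)) atTop atBot := by
      simpa [sub_eq_add_neg] using h0.const_mul_atBot hc
    simpa using (((Real.tendsto_exp_atBot.comp this).const_mul c⁻¹).neg)
  refine ⟨integrableOn_Ioi_deriv_of_nonneg' hderiv hpos htend, ?_⟩
  rw [integral_Ioi_of_hasDerivAt_of_nonneg' hderiv hpos htend]
  simp

lemma aux_exp_Iic (c t : ℝ) (hc : 0 < c) :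
    IntegrableOn (fun s => Real.exp (c * (s - t))) (Iic t) ∧
      ∫ s in Iic t, Real.exp (c * (s - t)) = c⁻¹ := by
  obtain ⟨hint, hval⟩ := aux_exp_Ioi c t hc
  constructor
  · have hemb : MeasurableEmbedding (fun x : ℝ => -x) :=
      (Homeomorph.neg ℝ).isClosedEmbedding.measurableEmbedding
    have hmp : MeasurePreserving (fun x : ℝ => -x) volume volume :=
      ⟨measurable_neg, Measure.map_neg_eq_self volume⟩
    have h2 : ((fun x : ℝ => -x) ⁻¹' Iic t) = Ici (-t) := by
      ext x; simp [neg_le]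
    have hIci : IntegrableOn (fun x => Real.exp (c * (-x - t))) (Ici (-t)) := by
      rwa [integrableOn_Ici_iff_integrableOn_Ioi]
    have := (hmp.integrableOn_comp_preimage hemb
      (f := fun s => Real.exp (c * (s - t))) (s := Iic t)).mp
    rw [h2] at this
    exact this hIci
  · have h3 := integral_comp_neg_Ioi (-t) (fun s => Real.exp (c * (s - t)))
    simp only [neg_neg] at h3
    exact h3.symm.trans hval

lemma slab_bound {m : ℕ} (R : ℝ) (hR : 0 < R)
    (ρ : EuclideanSpace ℝ (Fin (m + 1))) (hρ : ‖ρ‖ = 1) (c t : ℝ) (hc : 0 < c) :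
    IntegrableOn (fun x => Real.exp (c * (⟪x, ρ⟫ - t)))
      (Metric.closedBall 0 R ∩ halfSpace ρ t) ∧
    ∫ x in Metric.closedBall 0 R ∩ halfSpace ρ t, Real.exp (c * (⟪x, ρ⟫ - t))
      ≤ (2 * R) ^ m / c := by
  -- orthonormal basis with b 0 = ρ
  have hcard : Module.finrank ℝ (EuclideanSpace ℝ (Fin (m + 1))) = Fintype.card (Fin (m + 1)) := by
    simp [finrank_euclideanSpace]
  have horth : Orthonormal ℝ (({0} : Set (Fin (m + 1))).restrict (fun _ => ρ)) := by
    constructor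
    · intro i; exact hρ
    · intro i j hij; exact absurd (Subsingleton.elim i j) hij
  obtain ⟨b, hb⟩ := horth.exists_orthonormalBasis_extension_of_card_eq hcard
  have hb0 : b 0 = ρ := hb 0 rfl
  -- the composed map Φ
  set ψ := (MeasurableEquiv.toLp 2 (Fin (m + 1) → ℝ)).symm with hψ
  set χ := MeasurableEquiv.piFinSuccAbove (fun _ : Fin (m + 1) => ℝ) 0 with hχ
  set Φ : EuclideanSpace ℝ (Fin (m + 1)) → ℝ × (Fin m → ℝ) :=
    fun x => χ (ψ (b.repr x)) with hΦdef
  have hΦmp : MeasurePreserving Φ volume volume := by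
    exact ((volume_preserving_piFinSuccAbove (fun _ : Fin (m+1) => ℝ) 0).comp
      (EuclideanSpace.volume_preserving_symm_measurableEquiv_toLp (Fin (m+1)))).comp
      b.measurePreserving_repr
  have hΦemb : MeasurableEmbedding Φ := by
    exact (χ.measurableEmbedding.comp ψ.measurableEmbedding).comp
      (b.repr.toHomeomorph.measurableEmbedding)
  have hΦ1 : ∀ x, (Φ x).1 = ⟪x, ρ⟫ := by
    intro x
    have : (Φ x).1 = b.repr x 0 := rfl
    rw [this, b.repr_apply_apply, hb0, real_inner_comm]
  have hΦ2 : ∀ x (j : Fin m), (Φ x).2 j = ⟪b ((0 : Fin (m+1)).succAbove j), x⟫ := by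
    intro x j
    have : (Φ x).2 j = b.repr x ((0 : Fin (m+1)).succAbove j) := rfl
    rw [this, b.repr_apply_apply]
  set Tprod : Set (ℝ × (Fin m → ℝ)) :=
    (Iic t) ×ˢ (univ.pi fun _ : Fin m => Icc (-R) R) with hT
  have hsub : Metric.closedBall 0 R ∩ halfSpace ρ t ⊆ Φ ⁻¹' Tprod := by
    rintro x ⟨hx1, hx2⟩
    constructor
    · rw [hΦ1]; exact hx2
    · intro j _
      rw [hΦ2]
      have h1 : |⟪b ((0 : Fin (m+1)).succAbove j), x⟫| ≤ ‖b _‖ * ‖x‖ := abs_real_inner_le_norm _ _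
      rw [b.orthonormal.1 _, one_mul] at h1
      have hxR : ‖x‖ ≤ R := by simpa using Metric.mem_closedBall.mp hx1
      have := h1.trans hxR
      exact abs_le.mp this
  -- integrability and value on Tprod
  obtain ⟨hIic_int, hIic_val⟩ := aux_exp_Iic c t hc
  have hBmeas : volume (univ.pi fun _ : Fin m => Icc (-R) R) = ENNReal.ofReal (2 * R) ^ m := by
    rw [volume_pi_pi]
    have : R - -R = 2 * R := by ring
    simp [Real.volume_Icc, this]
  have hBfin : volume (univ.pi fun _ : Fin m => Icc (-R) R) ≠ ⊤ := by
    rw [hBmeas]; exact ENNReal.pow_ne_top ENNReal.ofReal_ne_top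
  haveI : IsFiniteMeasure (volume.restrict (univ.pi fun _ : Fin m => Icc (-R) R)) :=
    ⟨by rw [Measure.restrict_apply_univ]; exact hBfin.lt_top⟩
  have hprod_int : IntegrableOn (fun z : ℝ × (Fin m → ℝ) => Real.exp (c * (z.1 - t))) Tprod := by
    have h1 : Integrable (fun z : ℝ × (Fin m → ℝ) =>
        Real.exp (c * (z.1 - t)) * (1 : ℝ))
        ((volume.restrict (Iic t)).prod (volume.restrict (univ.pi fun _ : Fin m => Icc (-R) R))) :=
      Integrable.mul_prod hIic_int (integrable_const _)
    rw [Measure.prod_restrict, ← Measure.volume_eq_prod] at h1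
    simp only [mul_one] at h1
    exact h1
  have hprod_val : ∫ z in Tprod, Real.exp (c * (z.1 - t)) = c⁻¹ * (2 * R) ^ m := by
    have h1 := integral_prod_mul (μ := volume.restrict (Iic t))
      (ν := volume.restrict (univ.pi fun _ : Fin m => Icc (-R) R))
      (fun s => Real.exp (c * (s - t))) (fun _ => (1 : ℝ))
    rw [Measure.prod_restrict, ← Measure.volume_eq_prod] at h1
    simp only [mul_one] at h1
    rw [hT, h1, hIic_val, setIntegral_const, smul_eq_mul, mul_one, measureReal_def, hBmeas,
      ENNReal.toReal_pow, ENNReal.toReal_ofReal (by linarith : (0:ℝ) ≤ 2 * R)]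
  -- transfer to preimage
  have hpre_int : IntegrableOn (fun x => Real.exp (c * (⟪x, ρ⟫ - t))) (Φ ⁻¹' Tprod) := by
    have := (hΦmp.integrableOn_comp_preimage hΦemb
      (f := fun z : ℝ × (Fin m → ℝ) => Real.exp (c * (z.1 - t))) (s := Tprod)).mpr hprod_int
    convert this using 1
    ext x
    simp [Function.comp, hΦ1 x]
  have hpre_val : ∫ x in Φ ⁻¹' Tprod, Real.exp (c * (⟪x, ρ⟫ - t)) = c⁻¹ * (2 * R) ^ m := by
    have := hΦmp.setIntegral_preimage_emb hΦemb
      (fun z : ℝ × (Fin m → ℝ) => Real.exp (c * (z.1 - t))) Tprod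
    rw [← hprod_val, ← this]
    apply setIntegral_congr_fun (((measurableSet_Iic).prod
      (MeasurableSet.univ_pi fun _ => measurableSet_Icc)).preimage hΦmp.measurable)
    intro x _
    show Real.exp (c * (⟪x, ρ⟫ - t)) = Real.exp (c * ((Φ x).1 - t))
    rw [hΦ1 x]
  constructor
  · exact hpre_int.mono_set hsub
  · have h1 : ∫ x in Metric.closedBall 0 R ∩ halfSpace ρ t, Real.exp (c * (⟪x, ρ⟫ - t))
        ≤ ∫ x in Φ ⁻¹' Tprod, Real.exp (c * (⟪x, ρ⟫ - t)) := by
      apply setIntegral_mono_set hpre_int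
      · filter_upwards with x using (Real.exp_pos _).le
      · exact HasSubset.Subset.eventuallyLE hsub
    rw [hpre_val] at h1
    calc _ ≤ c⁻¹ * (2*R)^m := h1
    _ = (2*R)^m / c := by field_simp

/-- If `m(D \ H_{ρ,t}) = 0`, where `D = esssupp(σ − 1)`, then for all `τ > 0`,
`∫_Ω |σ − 1| e^{pτ(x·ρ − t)} dx ≤ ‖σ − 1‖_{L^∞(Ω)} (2R)^{n−1}/(pτ)`, so the integral
tends to `0` as `τ → ∞`. -/
theorem indicator_integral_decay {n : ℕ} (Ω : Set (EuclideanSpace ℝ (Fin n)))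
    (hΩo : IsOpen Ω) (hΩb : Bornology.IsBounded Ω)
    (R : ℝ) (hR : 0 < R) (hΩR : Ω ⊆ Metric.closedBall 0 R)
    (σ : EuclideanSpace ℝ (Fin n) → ℝ) (hσm : Measurable σ)
    (hσbd : eLpNormEssSup (fun x => σ x - 1) (volume.restrict Ω) ≠ ⊤)
    (ρ : EuclideanSpace ℝ (Fin n)) (hρ : ‖ρ‖ = 1) (p : ℝ) (hp : 0 < p) (t : ℝ)
    (ht : volume (essSupport Ω (fun x => σ x - 1) \ halfSpace ρ t) = 0) :
    (∀ τ : ℝ, 0 < τ →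
      (∫ x in Ω, |σ x - 1| * Real.exp (p * τ * (⟪x, ρ⟫ - t)))
        ≤ (eLpNormEssSup (fun x => σ x - 1) (volume.restrict Ω)).toReal *
            ((2 * R) ^ (n - 1) / (p * τ))) ∧
    Tendsto (fun τ : ℝ => ∫ x in Ω, |σ x - 1| * Real.exp (p * τ * (⟪x, ρ⟫ - t)))
      atTop (𝓝 0) := by
  obtain _ | m := n
  · exfalso
    have : ρ = 0 := Subsingleton.elim _ _
    rw [this, norm_zero] at hρ
    norm_num at hρ
  set f : EuclideanSpace ℝ (Fin (m + 1)) → ℝ := fun x => σ x - 1 with hf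
  set M : ℝ := (eLpNormEssSup f (volume.restrict Ω)).toReal with hM
  have hM0 : 0 ≤ M := ENNReal.toReal_nonneg
  have hΩm : MeasurableSet Ω := hΩo.measurableSet
  have hinner_cont : Continuous (fun x : EuclideanSpace ℝ (Fin (m+1)) => ⟪x, ρ⟫) :=
    continuous_id.inner continuous_const
  have hHc : IsClosed (halfSpace ρ t) := isClosed_le hinner_cont continuous_const
  have hHm : MeasurableSet (halfSpace ρ t) := hHc.measurableSet
  haveI : IsFiniteMeasure (volume.restrict Ω) :=
    ⟨by rw [Measure.restrict_apply_univ]; exact hΩb.measure_lt_top⟩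
  -- a.e. bound by M
  have h1 : ∀ᵐ x ∂volume.restrict Ω, |f x| ≤ M := by
    filter_upwards [ae_le_eLpNormEssSup (f := f) (μ := volume.restrict Ω)] with x hx
    have h2 : ((‖f x‖₊ : ℝ≥0∞)).toReal ≤ M := ENNReal.toReal_mono hσbd hx
    simpa [Real.norm_eq_abs] using h2
  -- a.e. support condition
  have h2 : ∀ᵐ x ∂volume.restrict Ω, f x ≠ 0 → x ∈ halfSpace ρ t := by
    set S := {O : Set (EuclideanSpace ℝ (Fin (m+1))) |
      IsOpen O ∧ O ⊆ Ω ∧ volume {x ∈ O | f x ≠ 0} = 0} with hS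
    obtain ⟨T, hTc, hTsub, hTU⟩ :=
      TopologicalSpace.isOpen_sUnion_countable S (fun O hO => hO.1)
    have hN1 : volume {x ∈ ⋃₀ S | f x ≠ 0} = 0 := by
      rw [← hTU]
      have hsub : {x ∈ ⋃₀ T | f x ≠ 0} ⊆ ⋃ O ∈ T, {x ∈ O | f x ≠ 0} := by
        rintro x ⟨⟨O, hO, hxO⟩, hfx⟩
        exact mem_biUnion hO ⟨hxO, hfx⟩
      refine measure_mono_null hsub ?_
      exact (measure_biUnion_null_iff hTc).mpr (fun O hO => (hTsub hO).2.2)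
    have hNull : volume ({x ∈ ⋃₀ S | f x ≠ 0} ∪ (essSupport Ω f \ halfSpace ρ t)) = 0 :=
      measure_union_null hN1 ht
    rw [ae_restrict_iff' hΩm, ae_iff]
    refine measure_mono_null ?_ hNull
    intro x hx
    simp only [mem_setOf_eq] at hx
    push_neg at hx
    obtain ⟨hxΩ, hfx, hxH⟩ := hx
    by_cases hU : x ∈ ⋃₀ S
    · exact Or.inl ⟨hU, hfx⟩
    · refine Or.inr ⟨⟨hxΩ, ?_⟩, hxH⟩
      rw [← sUnion_eq_biUnion]
      exact hU
  -- the key bound for fixed τ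
  have key : ∀ τ : ℝ, 0 < τ →
      (∫ x in Ω, |f x| * Real.exp (p * τ * (⟪x, ρ⟫ - t)))
        ≤ M * ((2 * R) ^ m / (p * τ)) := by
    intro τ hτ
    have hc : 0 < p * τ := mul_pos hp hτ
    set c := p * τ with hcdef
    set g0 : EuclideanSpace ℝ (Fin (m+1)) → ℝ :=
      (halfSpace ρ t).indicator (fun x => M * Real.exp (c * (⟪x, ρ⟫ - t))) with hg0
    obtain ⟨hKint, hKval⟩ := slab_bound R hR ρ hρ c t hc
    -- integrability of g0 on Ω
    have hcont : Continuous (fun x : EuclideanSpace ℝ (Fin (m+1)) =>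
        M * Real.exp (c * (⟪x, ρ⟫ - t))) :=
      continuous_const.mul (Real.continuous_exp.comp
        (continuous_const.mul (hinner_cont.sub continuous_const)))
    have hg0m : AEStronglyMeasurable g0 (volume.restrict Ω) :=
      (hcont.measurable.indicator hHm).aestronglyMeasurable
    have hg0bd : ∀ x, ‖g0 x‖ ≤ M := by
      intro x
      rw [hg0]
      by_cases hx : x ∈ halfSpace ρ t
      · rw [indicator_of_mem hx]
        have hexp : Real.exp (c * (⟪x, ρ⟫ - t)) ≤ 1 := by
          apply Real.exp_le_one_iff.mpr
          have : ⟪x, ρ⟫ - t ≤ 0 := sub_nonpos.mpr hx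
          exact mul_nonpos_of_nonneg_of_nonpos hc.le this
        rw [Real.norm_eq_abs, abs_of_nonneg (mul_nonneg hM0 (Real.exp_pos _).le)]
        calc M * Real.exp (c * (⟪x, ρ⟫ - t)) ≤ M * 1 :=
              mul_le_mul_of_nonneg_left hexp hM0
        _ = M := mul_one M
      · rw [indicator_of_notMem hx]
        simpa using hM0
    have hg0int : Integrable g0 (volume.restrict Ω) :=
      Integrable.mono' (integrable_const M) hg0m (ae_of_all _ hg0bd)
    -- pointwise a.e. bound
    have hle : ∀ᵐ x ∂volume.restrict Ω,
        |f x| * Real.exp (c * (⟪x, ρ⟫ - t)) ≤ g0 x := by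
      filter_upwards [h1, h2] with x hx1 hx2
      by_cases hfx : f x = 0
      · rw [hfx]
        simp only [abs_zero, zero_mul]
        rw [hg0]
        by_cases hx : x ∈ halfSpace ρ t
        · rw [indicator_of_mem hx]
          exact mul_nonneg hM0 (Real.exp_pos _).le
        · rw [indicator_of_notMem hx]
      · have hxH := hx2 hfx
        rw [hg0, indicator_of_mem hxH]
        exact mul_le_mul_of_nonneg_right hx1 (Real.exp_pos _).le
    have step1 : (∫ x in Ω, |f x| * Real.exp (c * (⟪x, ρ⟫ - t))) ≤ ∫ x in Ω, g0 x :=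
      integral_mono_of_nonneg
        (ae_of_all _ fun x => mul_nonneg (abs_nonneg _) (Real.exp_pos _).le)
        hg0int hle
    have step2 : (∫ x in Ω, g0 x)
        = ∫ x in Ω ∩ halfSpace ρ t, M * Real.exp (c * (⟪x, ρ⟫ - t)) := by
      rw [hg0, setIntegral_indicator hHm]
    have hKint' : IntegrableOn (fun x => M * Real.exp (c * (⟪x, ρ⟫ - t)))
        (Metric.closedBall 0 R ∩ halfSpace ρ t) := hKint.const_mul M
    have step3 : (∫ x in Ω ∩ halfSpace ρ t, M * Real.exp (c * (⟪x, ρ⟫ - t)))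
        ≤ ∫ x in Metric.closedBall 0 R ∩ halfSpace ρ t,
            M * Real.exp (c * (⟪x, ρ⟫ - t)) := by
      apply setIntegral_mono_set hKint'
      · filter_upwards with x using mul_nonneg hM0 (Real.exp_pos _).le
      · exact HasSubset.Subset.eventuallyLE (inter_subset_inter_left _ hΩR)
    have step4 : (∫ x in Metric.closedBall 0 R ∩ halfSpace ρ t,
          M * Real.exp (c * (⟪x, ρ⟫ - t))) ≤ M * ((2 * R) ^ m / c) := by
      rw [integral_const_mul]
      exact mul_le_mul_of_nonneg_left hKval hM0
    calc (∫ x in Ω, |f x| * Real.exp (c * (⟪x, ρ⟫ - t))) ≤ ∫ x in Ω, g0 x := step1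
    _ = _ := step2
    _ ≤ _ := step3
    _ ≤ M * ((2 * R) ^ m / c) := step4
  refine ⟨by simpa using key, ?_⟩
  -- limit
  have hub : Tendsto (fun τ : ℝ => M * ((2 * R) ^ m / (p * τ))) atTop (𝓝 0) := by
    have h0 : Tendsto (fun τ : ℝ => (M * (2 * R) ^ m / p) * τ⁻¹) atTop (𝓝 0) := by
      simpa using tendsto_inv_atTop_zero.const_mul (M * (2 * R) ^ m / p)
    convert h0 using 2 with τ
    field_simp
  have hlow : ∀ τ : ℝ, 0 ≤ ∫ x in Ω, |f x| * Real.exp (p * τ * (⟪x, ρ⟫ - t)) := by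
    intro τ
    exact integral_nonneg fun x => mul_nonneg (abs_nonneg _) (Real.exp_pos _).le
  apply tendsto_of_tendsto_of_tendsto_of_le_of_le' tendsto_const_nhds hub
  · exact Eventually.of_forall hlow
  · filter_upwards [eventually_gt_atTop (0:ℝ)] with τ hτ using key τ hτ
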